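/- arXiv:1810.06722 — 2 statements merged into one kernel-verified Lean document; each statement's English description precedes it below -/
import Mathlib

section
/- Fix n < l and consider the tree T_l of Boolean lists of length at most l ordered by the prefix relation. Let u be a node of length n, and let w₀, w₁ be two nodes of length l both extending u. Then there exists an order-automorphism π of T_l, preserving lengths, such that π(w₀) = w₁ and π fixes every node that does not have u as a proper prefix (in particular π fixes all nodes of length ≤ n). -/
private lemma zipxor_invol : ∀ (r d : List Bool), r.length ≤ d.length →
    (r.zipWith xor d).zipWith xor d = r := by
  intro r
  induction r with
  | nil => intro d _; simp
  | cons a r ih =>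
    intro d hd
    cases d with
    | nil => simp at hd
    | cons e d' =>
      simp only [List.zipWith_cons_cons, List.cons.injEq]
      refine ⟨by cases a <;> cases e <;> rfl, ih d' (by simpa using hd)⟩

private lemma zipxor_cancel : ∀ (r s : List Bool), r.length ≤ s.length →
    r.zipWith xor (r.zipWith xor s) = s.take r.length := by
  intro r
  induction r with
  | nil => intro s _; simp
  | cons a r ih =>
    intro s hs
    cases s with
    | nil => simp at hs
    | cons b s' =>
      simp only [List.zipWith_cons_cons, List.length_cons, List.take_succ_cons, List.take, List.cons.injEq]
      refine ⟨by cases a <;> cases b <;> rfl, ih s' (by simpa using hs)⟩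

private lemma zipxor_prefix : ∀ (r s d : List Bool), r <+: s →
    r.zipWith xor d <+: s.zipWith xor d := by
  intro r
  induction r with
  | nil => intro s d _; simp
  | cons a r ih =>
    intro s d h
    cases s with
    | nil => exact absurd (List.IsPrefix.length_le h) (by simp)
    | cons b s' =>
      rw [List.cons_prefix_cons] at h
      obtain ⟨rfl, h2⟩ := h
      cases d with
      | nil => simp
      | cons e d' =>
        simp only [List.zipWith_cons_cons, List.cons_prefix_cons]
        exact ⟨trivial, ih s' d' h2⟩

private def gmap (l n : ℕ) (hn : n ≤ l) (u d : List Bool) (hu : u.length = n)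
    (hdlen : d.length = l - n)
    (t : {t : List Bool // t.length ≤ l}) : {t : List Bool // t.length ≤ l} :=
  if _ : u <+: t.1 then
    ⟨u ++ List.zipWith xor (t.1.drop n) d, by
      have := t.2
      simp only [List.length_append, hu, List.length_zipWith, hdlen]
      omega⟩
  else t

theorem stmt_11 (n l : ℕ) (hnl : n < l)
    (u w₀ w₁ : {t : List Bool // t.length ≤ l})
    (hu : u.1.length = n) (hw₀ : w₀.1.length = l) (hw₁ : w₁.1.length = l)
    (h₀ : u.1 <+: w₀.1) (h₁ : u.1 <+: w₁.1) :
    ∃ π : Equiv {t : List Bool // t.length ≤ l} {t : List Bool // t.length ≤ l},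
      (∀ a b : {t : List Bool // t.length ≤ l}, a.1 <+: b.1 ↔ (π a).1 <+: (π b).1) ∧
      (∀ a : {t : List Bool // t.length ≤ l}, (π a).1.length = a.1.length) ∧
      π w₀ = w₁ ∧
      (∀ a : {t : List Bool // t.length ≤ l}, ¬ (u.1 <+: a.1 ∧ u.1 ≠ a.1) → π a = a) := by
  classical
  set d : List Bool := List.zipWith xor (w₀.1.drop n) (w₁.1.drop n) with hdd
  have hdlen : d.length = l - n := by simp [hdd, hw₀, hw₁]
  set g := gmap l n hnl.le u.1 d hu hdlen with hg
  have gpos : ∀ t, (h : u.1 <+: t.1) →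
      (g t).1 = u.1 ++ List.zipWith xor (t.1.drop n) d := by
    intro t h
    simp [hg, gmap, dif_pos h]
  have gneg : ∀ t, ¬ u.1 <+: t.1 → g t = t := by
    intro t h
    simp [hg, gmap, dif_neg h]
  have hsplit : ∀ t : {t : List Bool // t.length ≤ l}, u.1 <+: t.1 →
      t.1 = u.1 ++ t.1.drop n := by
    intro t h
    obtain ⟨s, hs⟩ := h
    rw [← hs, List.drop_append_of_le_length (by omega), List.drop_eq_nil_of_le (by omega),
      List.nil_append]
  have gdrop : ∀ t, (h : u.1 <+: t.1) →
      (g t).1.drop n = List.zipWith xor (t.1.drop n) d := by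
    intro t h
    rw [gpos t h, ← hu, List.drop_left]
  have gprefpos : ∀ t, (h : u.1 <+: t.1) → u.1 <+: (g t).1 := by
    intro t h
    rw [gpos t h]; exact List.prefix_append _ _
  have ginvol : Function.Involutive g := by
    intro t
    by_cases h : u.1 <+: t.1
    · have h2 := gprefpos t h
      apply Subtype.ext
      rw [gpos _ h2, gdrop t h, zipxor_invol _ _ ?_, ← hsplit t h]
      have h1 : n ≤ t.1.length := hu ▸ h.length_le
      have := t.2
      simp [hdlen]; omega
    · rw [gneg t h, gneg t h]
  have gmono : ∀ a b : {t : List Bool // t.length ≤ l}, a.1 <+: b.1 → (g a).1 <+: (g b).1 := by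
    intro a b hab
    by_cases ha : u.1 <+: a.1
    · have hb : u.1 <+: b.1 := ha.trans hab
      rw [gpos a ha, gpos b hb]
      rw [List.prefix_append_right_inj]
      apply zipxor_prefix
      obtain ⟨s, hs⟩ := hab
      rw [← hs, List.drop_append_of_le_length (by rw [← hu]; exact ha.length_le)]
      exact List.prefix_append _ _
    · rw [gneg a ha]
      by_cases hb : u.1 <+: b.1
      · rcases List.prefix_or_prefix_of_prefix hab hb with h | h
        · exact h.trans (gprefpos b hb)
        · exact absurd h ha
      · rw [gneg b hb]; exact hab
  refine ⟨ginvol.toPerm g, ?_, ?_, ?_, ?_⟩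
  · intro a b
    show a.1 <+: b.1 ↔ (g a).1 <+: (g b).1
    constructor
    · exact gmono a b
    · intro h
      have := gmono _ _ h
      rwa [ginvol a, ginvol b] at this
  · intro a
    show (g a).1.length = a.1.length
    by_cases h : u.1 <+: a.1
    · have h1 : n ≤ a.1.length := hu ▸ h.length_le
      have := a.2
      rw [gpos a h]
      simp [hu, hdlen]
      omega
    · rw [gneg a h]
  · show g w₀ = w₁
    apply Subtype.ext
    show (g w₀).1 = w₁.1
    rw [gpos w₀ h₀, hdd, zipxor_cancel _ _ (by simp [hw₀, hw₁]),
      List.take_of_length_le (by simp [hw₀, hw₁]), ← hsplit w₁ h₁]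
  · intro a ha
    show g a = a
    by_cases h : u.1 <+: a.1
    · have heq : u.1 = a.1 := by
        by_contra hne
        exact ha ⟨h, hne⟩
      apply Subtype.ext
      rw [gpos a h, ← heq, List.drop_eq_nil_of_le (by omega)]
      simp
    · exact gneg a h
end

section
/- Let λ be a countable limit ordinal. Then there exists a family of functions C_δ : ℕ → δ, indexed by the limit ordinals δ < λ, such that: (1) each C_δ is strictly increasing and cofinal in δ; and (2) for all limit ordinals δ, γ < λ and all n, m ∈ ℕ with (δ, n) ≠ (γ, m), the ordinal C_δ(n) is not equal to C_γ(m), nor to C_γ(m) + 1, nor is C_δ(n) + 1 equal to C_γ(m). -/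
open Ordinal

universe u

/-- Adding a natural number to an ordinal below a limit stays below the limit. -/
lemma aux_add_nat_lt {δ γ : Ordinal.{u}} (hδ : Order.IsSuccLimit δ) (h : γ < δ) (n : ℕ) :
    γ + n < δ := by
  induction n with
  | zero => simpa using h
  | succ k ih =>
      have : ((k + 1 : ℕ) : Ordinal) = (k : Ordinal) + 1 := by norm_cast
      rw [this, ← add_assoc]
      exact hδ.succ_lt ih

/-- For a limit ordinal δ and β < δ, we have ω * (β / ω) + ω ≤ δ. -/
lemma aux_quot_omega {δ β : Ordinal.{u}} (hδ : Order.IsSuccLimit δ) (h : β < δ) :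
    ω * (β / ω) + ω ≤ δ := by
  rw [Ordinal.add_le_iff_of_isSuccLimit isSuccLimit_omega0]
  intro r hr
  obtain ⟨n, rfl⟩ := Ordinal.lt_omega0.mp hr
  exact (aux_add_nat_lt hδ ((Ordinal.mul_div_le β ω).trans_lt h) n).le

/-- Uniqueness of ω-division with natural remainder. -/
lemma aux_uniq {q₁ q₂ : Ordinal.{u}} {r₁ r₂ : ℕ}
    (h : ω * q₁ + r₁ = ω * q₂ + r₂) : q₁ = q₂ ∧ r₁ = r₂ := by
  have hq : q₁ = q₂ := by
    have h1 : (ω * q₁ + (r₁ : Ordinal)) / ω = q₁ := by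
      rw [Ordinal.mul_add_div _ omega0_ne_zero,
        Ordinal.div_eq_zero_of_lt (nat_lt_omega0 r₁), add_zero]
    have h2 : (ω * q₂ + (r₂ : Ordinal)) / ω = q₂ := by
      rw [Ordinal.mul_add_div _ omega0_ne_zero,
        Ordinal.div_eq_zero_of_lt (nat_lt_omega0 r₂), add_zero]
    rw [← h1, ← h2, h]
  subst hq
  refine ⟨rfl, ?_⟩
  have := (add_right_inj (ω * q₁)).mp h
  exact_mod_cast this

theorem stmt_16 (lam : Ordinal) (hlim : Order.IsSuccLimit lam)
    (hcount : lam.card ≤ Cardinal.aleph0) :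
    ∃ C : Ordinal → ℕ → Ordinal,
      (∀ δ : Ordinal, δ < lam → Order.IsSuccLimit δ →
        StrictMono (C δ) ∧ (∀ n, C δ n < δ) ∧ (∀ β < δ, ∃ n, β ≤ C δ n)) ∧
      (∀ δ γ : Ordinal, δ < lam → Order.IsSuccLimit δ → γ < lam → Order.IsSuccLimit γ →
        ∀ n m : ℕ, (δ, n) ≠ (γ, m) →
          C δ n ≠ C γ m ∧ C δ n ≠ C γ m + 1 ∧ C δ n + 1 ≠ C γ m) := by
  classical
  -- an injection of the ordinals below lam into ℕ
  have hcnt : Countable (Set.Iio lam) := by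
    rw [← Cardinal.mk_le_aleph0_iff, Ordinal.mk_Iio_ordinal]
    simpa using Cardinal.lift_le.mpr hcount
  obtain ⟨f, hf⟩ := exists_injective_nat (Set.Iio lam)
  set e : Ordinal → ℕ := fun δ => if h : δ < lam then f ⟨δ, h⟩ else 0 with he
  have he_inj : ∀ {δ γ : Ordinal}, δ < lam → γ < lam → e δ = e γ → δ = γ := by
    intro δ γ hδ hγ h
    simp only [he, dif_pos hδ, dif_pos hγ] at h
    exact congrArg Subtype.val (hf h)
  -- for each limit δ < lam, a cofinal ℕ-sequence below δ
  have key : ∀ δ : Ordinal, ∃ a : ℕ → Ordinal, δ < lam → Order.IsSuccLimit δ →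
      (∀ n, a n < δ) ∧ (∀ β < δ, ∃ n, β ≤ a n) := by
    intro δ
    by_cases h : δ < lam ∧ Order.IsSuccLimit δ
    · have hcnt' : Countable (Set.Iio δ) := by
        rw [← Cardinal.mk_le_aleph0_iff, Ordinal.mk_Iio_ordinal]
        have : δ.card ≤ Cardinal.aleph0 :=
          le_trans (Ordinal.card_le_card h.1.le) hcount
        simpa using Cardinal.lift_le.mpr this
      have hne : Nonempty (Set.Iio δ) := ⟨⟨0, h.2.pos⟩⟩
      obtain ⟨g, hg⟩ := exists_surjective_nat (Set.Iio δ)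
      refine ⟨fun n => (g n : Ordinal), fun _ _ => ⟨fun n => (g n).2, ?_⟩⟩
      intro β hβ
      obtain ⟨n, hn⟩ := hg ⟨β, hβ⟩
      exact ⟨n, by simp [hn]⟩
    · exact ⟨fun _ => 0, fun h1 h2 => absurd ⟨h1, h2⟩ h⟩
  choose a ha using key
  -- monotone quotient sequence
  set q : Ordinal → ℕ → Ordinal :=
    fun δ n => (Finset.range (n + 1)).sup (fun k => a δ k / ω) with hq
  set C : Ordinal → ℕ → Ordinal :=
    fun δ n => ω * q δ n + (2 * Nat.pair (e δ) n : ℕ) with hC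
  have hq_mono : ∀ δ, Monotone (q δ) := by
    intro δ n m hnm
    exact Finset.sup_mono (Finset.range_subset_range.mpr (by omega))
  have hq_bound : ∀ δ, δ < lam → Order.IsSuccLimit δ → ∀ n, ω * q δ n + ω ≤ δ := by
    intro δ hδ hδl n
    obtain ⟨k, hk, hkeq⟩ := Finset.exists_mem_eq_sup (Finset.range (n + 1))
      (Finset.nonempty_range_iff.mpr (Nat.succ_ne_zero n)) (fun k => a δ k / ω)
    rw [hq]
    simp only
    rw [hkeq]
    exact aux_quot_omega hδl ((ha δ hδ hδl).1 k)
  have hq_div : ∀ δ n, a δ n / ω ≤ q δ n := by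
    intro δ n
    show a δ n / ω ≤ (Finset.range (n + 1)).sup (fun k => a δ k / ω)
    exact Finset.le_sup (f := fun k => a δ k / ω)
      (Finset.mem_range.mpr (Nat.lt_succ_self n))
  have hC_lt : ∀ δ, δ < lam → Order.IsSuccLimit δ → ∀ n, C δ n < δ := by
    intro δ hδ hδl n
    refine lt_of_lt_of_le ?_ (hq_bound δ hδ hδl n)
    exact add_lt_add_right (nat_lt_omega0 _) _
  refine ⟨C, ?_, ?_⟩
  · intro δ hδ hδl
    refine ⟨?_, hC_lt δ hδ hδl, ?_⟩
    · -- strict mono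
      apply strictMono_nat_of_lt_succ
      intro n
      rcases lt_or_eq_of_le (hq_mono δ (Nat.le_succ n)) with h | h
      · calc C δ n < ω * q δ n + ω := add_lt_add_right (nat_lt_omega0 _) _
          _ = ω * (q δ n + 1) := by rw [mul_add_one]
          _ ≤ ω * q δ (n + 1) := by
              apply mul_le_mul_right
              rw [Ordinal.add_one_eq_succ]
              exact Order.succ_le_of_lt h
          _ ≤ C δ (n + 1) := le_self_add
      · show ω * q δ n + _ < ω * q δ (n+1) + _
        rw [← h]
        apply add_lt_add_right
        have : Nat.pair (e δ) n < Nat.pair (e δ) (n + 1) :=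
          Nat.pair_lt_pair_right _ (by omega)
        exact_mod_cast (by omega : 2 * Nat.pair (e δ) n < 2 * Nat.pair (e δ) (n+1))
    · -- cofinal
      intro β hβ
      obtain ⟨k, hk⟩ := (ha δ hδ hδl).2 β hβ
      obtain ⟨s, hs⟩ := Ordinal.lt_omega0.mp (Ordinal.mod_lt β omega0_ne_zero)
      refine ⟨max k s, ?_⟩
      have hdivle : β / ω ≤ q δ (max k s) :=
        le_trans (Ordinal.div_le_left hk ω)
          (le_trans (hq_div δ k) (hq_mono δ (le_max_left k s)))
      rcases lt_or_eq_of_le hdivle with h | h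
      · have : β < ω * (β / ω) + ω := by
          conv_lhs => rw [← Ordinal.div_add_mod β ω]
          exact add_lt_add_right (Ordinal.mod_lt β omega0_ne_zero) _
        refine le_trans (le_of_lt (lt_of_lt_of_le this ?_)) (le_self_add)
        rw [← mul_add_one]
        apply mul_le_mul_right
        rw [Ordinal.add_one_eq_succ]
        exact Order.succ_le_of_lt h
      · have hβeq : β = ω * q δ (max k s) + (s : Ordinal) := by
          conv_lhs => rw [← Ordinal.div_add_mod β ω]
          rw [h, hs]
        rw [hβeq]
        apply add_le_add_right
        have h1 : s ≤ 2 * Nat.pair (e δ) (max k s) := by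
          have := Nat.right_le_pair (e δ) (max k s)
          omega
        exact_mod_cast h1
  · -- disjointness
    intro δ γ hδ hδl hγ hγl n m hne
    have hpair : ¬ (e δ = e γ ∧ n = m) := by
      rintro ⟨h1, h2⟩
      exact hne (by rw [he_inj hδ hγ h1, h2])
    refine ⟨?_, ?_, ?_⟩
    · intro h
      obtain ⟨-, h2⟩ := aux_uniq h
      have h3 : Nat.pair (e δ) n = Nat.pair (e γ) m := by omega
      rw [Nat.pair_eq_pair] at h3
      exact hpair h3
    · intro h
      rw [add_assoc, show ((2 * Nat.pair (e γ) m : ℕ) : Ordinal) + 1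
        = ((2 * Nat.pair (e γ) m + 1 : ℕ) : Ordinal) by norm_cast] at h
      obtain ⟨-, h2⟩ := aux_uniq h
      omega
    · intro h
      rw [add_assoc, show ((2 * Nat.pair (e δ) n : ℕ) : Ordinal) + 1
        = ((2 * Nat.pair (e δ) n + 1 : ℕ) : Ordinal) by norm_cast] at h
      obtain ⟨-, h2⟩ := aux_uniq h
      omega
end
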